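/- Let S be a cancellative monoid which admits at least one left-Følner net (equivalently, S is a cancellative left-amenable monoid). Let h be a real-valued function on the set of finite subsets of S which is subadditive (h(A ∪ B) ≤ h(A) + h(B) for all finite A, B ⊆ S) and right-subinvariant (h(As) ≤ h(A) for all s ∈ S and all finite A ⊆ S). Then there exists a real number λ ≥ 0, depending only on h, such that for every left-Følner net (F_i)_{i∈I} of S, the net (h(F_i)/|F_i|)_{i∈I} converges to λ. -/

import Mathlib

open Filter

/-- A left-Følner net for a (multiplicative) structure `S`: a net, indexed by a nonempty
directed set `I`, of nonempty finite subsets `F i` of `S` such that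
`|s F_i \ F_i| / |F_i| → 0` for every `s ∈ S`. -/
structure LeftFolnerNet.{u, v} (S : Type u) [Mul S] [DecidableEq S] :
    Type (max u (v + 1)) where
  I : Type v
  [pre : Preorder I]
  [ne : Nonempty I]
  dir : IsDirected I (· ≤ ·)
  F : I → Finset S
  nonempty : ∀ i, (F i).Nonempty
  folner : ∀ s : S,
    Filter.Tendsto (fun i => ((((F i).image (s * ·)) \ F i).card : ℝ) / ((F i).card : ℝ))
      Filter.atTop (nhds 0)

attribute [instance] LeftFolnerNet.pre LeftFolnerNet.ne

namespace OWProof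

open Finset

set_option linter.unusedSectionVars false
set_option linter.unusedVariables false
set_option maxHeartbeats 1000000

universe u v w

variable {S : Type u} [CancelMonoid S] [DecidableEq S]

lemma card_limage (k : S) (A : Finset S) : (A.image (k * ·)).card = A.card :=
  Finset.card_image_of_injective _ (mul_right_injective k)

lemma card_rimage (c : S) (A : Finset S) : (A.image (· * c)).card = A.card :=
  Finset.card_image_of_injective _ (mul_left_injective c)

/-- elements outside `B` that map into `B` are at most `|kB \ B|`. -/
lemma card_bad_le (k : S) (B W : Finset S) :
    (W.filter (fun s => k * s ∈ B ∧ s ∉ B)).card ≤ ((B.image (k * ·)) \ B).card := by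
  have h1 : (W.filter (fun s => k * s ∈ B ∧ s ∉ B)).card ≤ (B \ B.image (k * ·)).card := by
    apply Finset.card_le_card_of_injOn (fun s => k * s)
    · intro s hs
      simp only [Finset.coe_filter, Finset.mem_filter, Finset.mem_coe, Set.mem_setOf_eq] at hs ⊢
      rw [Finset.mem_sdiff]
      refine ⟨hs.2.1, ?_⟩
      intro hmem
      rcases Finset.mem_image.1 hmem with ⟨t, ht, hts⟩
      exact hs.2.2 (mul_left_cancel hts ▸ ht)
    · intro a _ b _ hab
      exact mul_right_injective k hab
  have h2 : (B \ B.image (k * ·)).card = ((B.image (k * ·)) \ B).card := by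
    apply Finset.card_sdiff_comm
    rw [card_limage]
  omega

/-- elements of `F` that map outside `F` are at most `|kF \ F|`. -/
lemma card_bad_le' (k : S) (F : Finset S) :
    (F.filter (fun s => k * s ∉ F)).card ≤ ((F.image (k * ·)) \ F).card := by
  apply Finset.card_le_card_of_injOn (fun s => k * s)
  · intro s hs
    simp only [Finset.coe_filter, Finset.mem_filter, Finset.mem_coe, Set.mem_setOf_eq] at hs ⊢
    rw [Finset.mem_sdiff]
    exact ⟨Finset.mem_image_of_mem _ hs.1, hs.2⟩
  · intro a _ b _ hab
    exact mul_right_injective k hab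

/-- boundary is invariant under right translation. -/
lemma bnd_rimage (k c : S) (A : Finset S) :
    (((A.image (· * c)).image (k * ·)) \ (A.image (· * c))).card
      = ((A.image (k * ·)) \ A).card := by
  have h1 : (A.image (· * c)).image (k * ·) = (A.image (k * ·)).image (· * c) := by
    rw [Finset.image_image, Finset.image_image]
    apply Finset.image_congr
    intro x _
    simp [mul_assoc]
  rw [h1, ← Finset.image_sdiff _ _ (mul_left_injective c), card_rimage]

lemma h_nonneg (h : Finset S → ℝ) (H1 : ∀ A B : Finset S, h (A ∪ B) ≤ h A + h B)
    (A : Finset S) : 0 ≤ h A := by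
  have := H1 A A
  rw [Finset.union_self] at this
  linarith

lemma h_singleton_le (h : Finset S → ℝ)
    (H2 : ∀ (s : S) (A : Finset S), h (A.image (· * s)) ≤ h A) (x : S) :
    h {x} ≤ h {1} := by
  have he : ({1} : Finset S).image (· * x) = {x} := by simp
  simpa [he] using H2 x {1}

lemma h_le_card (h : Finset S → ℝ) (H1 : ∀ A B : Finset S, h (A ∪ B) ≤ h A + h B)
    (H2 : ∀ (s : S) (A : Finset S), h (A.image (· * s)) ≤ h A) (h0 : h ∅ = 0)
    (A : Finset S) : h A ≤ h {1} * A.card := by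
  classical
  induction A using Finset.induction_on with
  | empty => simp [h0]
  | @insert a A hnotmem ih =>
    have hh1 : h (insert a A) ≤ h {a} + h A := by
      rw [Finset.insert_eq]
      exact H1 _ _
    have hh2 := h_singleton_le h H2 a
    have hh3 : ((insert a A).card : ℝ) = A.card + 1 := by
      rw [Finset.card_insert_of_notMem hnotmem]; push_cast; ring
    rw [hh3]
    nlinarith [h_nonneg h H1 ({1} : Finset S)]

lemma h_biUnion_le (h : Finset S → ℝ) (H1 : ∀ A B : Finset S, h (A ∪ B) ≤ h A + h B)
    (h0 : h ∅ = 0) (C : Finset S) (f : S → Finset S) :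
    h (C.biUnion f) ≤ ∑ c ∈ C, h (f c) := by
  classical
  induction C using Finset.induction_on with
  | empty => simp [h0]
  | @insert a C hnotmem ih =>
    rw [Finset.biUnion_insert, Finset.sum_insert hnotmem]
    calc h (f a ∪ C.biUnion f) ≤ h (f a) + h (C.biUnion f) := H1 _ _
      _ ≤ _ := by linarith


lemma count_centers (K : Finset S) (x : S) (T : Finset S) :
    (T.filter (fun t => x ∈ K.image (· * t))).card ≤ K.card := by
  classical
  apply Finset.card_le_card_of_injOn
    (fun t => if ht : ∃ k ∈ K, k * t = x then ht.choose else 1)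
  · intro t ht
    simp only [Finset.coe_filter, Set.mem_setOf_eq, Finset.mem_filter, Finset.mem_image] at ht
    have he : ∃ k ∈ K, k * t = x := ht.2
    dsimp only
    rw [dif_pos he]
    exact he.choose_spec.1
  · intro a ha b hb hab
    simp only [Finset.coe_filter, Set.mem_setOf_eq, Finset.mem_image] at ha hb
    have hea : ∃ k ∈ K, k * a = x := ha.2
    have heb : ∃ k ∈ K, k * b = x := hb.2
    dsimp only at hab
    rw [dif_pos hea, dif_pos heb] at hab
    have h1 : hea.choose * a = x := hea.choose_spec.2
    have h2 : heb.choose * b = x := heb.choose_spec.2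
    rw [hab] at h1
    exact mul_left_cancel (h1.trans h2.symm)

lemma sum_inter_le (K E T : Finset S) :
    ∑ t ∈ T, ((K.image (· * t)) ∩ E).card ≤ K.card * E.card := by
  classical
  have h1 : ∀ t, ((K.image (· * t)) ∩ E).card
      = (E.filter (fun x => x ∈ K.image (· * t))).card := by
    intro t
    rw [Finset.filter_mem_eq_inter, Finset.inter_comm]
  calc ∑ t ∈ T, ((K.image (· * t)) ∩ E).card
      = ∑ t ∈ T, ∑ x ∈ E, if x ∈ K.image (· * t) then 1 else 0 := by
        simp_rw [h1, Finset.card_filter]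
    _ = ∑ x ∈ E, ∑ t ∈ T, if x ∈ K.image (· * t) then 1 else 0 := Finset.sum_comm
    _ = ∑ x ∈ E, (T.filter (fun t => x ∈ K.image (· * t))).card := by
        simp_rw [Finset.card_filter]
    _ ≤ ∑ _x ∈ E, K.card := Finset.sum_le_sum (fun x _ => count_centers K x T)
    _ = K.card * E.card := by rw [Finset.sum_const, smul_eq_mul, mul_comm]

lemma cover_step (K T : Finset S) (hK : K.Nonempty) (ε : ℝ) (hε0 : 0 < ε) (hε1 : ε < 1) :
    ∃ C : Finset S, C ⊆ T ∧
      (1 - ε) * (C.card * K.card) ≤ ((C.biUnion (fun t => K.image (· * t))).card : ℝ) ∧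
      ε * T.card ≤ ((C.biUnion (fun t => K.image (· * t))).card : ℝ) := by
  classical
  set tile : Finset S → Finset S := fun C => C.biUnion (fun t => K.image (· * t)) with htile
  have hK0 : (0:ℝ) < K.card := by
    have := Finset.card_pos.2 hK; positivity
  set 𝒮 := T.powerset.filter
    (fun C => (1 - ε) * (C.card * K.card) ≤ ((tile C).card : ℝ)) with h𝒮
  have hne : 𝒮.Nonempty := ⟨∅, by simp [h𝒮, htile]⟩
  obtain ⟨C, hCmem, hCmax⟩ := Finset.exists_max_image 𝒮 Finset.card hne
  rw [h𝒮, Finset.mem_filter, Finset.mem_powerset] at hCmem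
  obtain ⟨hCT, hCP⟩ := hCmem
  refine ⟨C, hCT, hCP, ?_⟩
  -- maximality: every t ∈ T has big overlap
  have key : ∀ t ∈ T, ε * K.card < (((K.image (· * t)) ∩ tile C).card : ℝ) := by
    intro t ht
    by_contra hle
    push_neg at hle
    have htC : t ∉ C := by
      intro htC
      have hsub : K.image (· * t) ⊆ tile C := by
        intro x hx
        exact Finset.mem_biUnion.2 ⟨t, htC, hx⟩
      rw [Finset.inter_eq_left.2 hsub, card_rimage] at hle
      nlinarith
    have hcard : ((tile (insert t C)).card : ℝ)
        ≥ (tile C).card + K.card - ((K.image (· * t)) ∩ tile C).card := by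
      have : tile (insert t C) = (K.image (· * t)) ∪ tile C := by
        simp [htile, Finset.biUnion_insert]
      rw [this]
      have h4 := Finset.card_union_add_card_inter (K.image (· * t)) (tile C)
      have h5 : (K.image (· * t)).card = K.card := card_rimage t K
      have h6 : ((K.image (· * t)) ∪ tile C).card + ((K.image (· * t)) ∩ tile C).card
          = K.card + (tile C).card := by rw [h4, h5]
      have h7 : (((K.image (· * t)) ∪ tile C).card : ℝ)
          + (((K.image (· * t)) ∩ tile C).card : ℝ)
          = (K.card : ℝ) + ((tile C).card : ℝ) := by exact_mod_cast h6
      linarith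
    have hmemS : insert t C ∈ 𝒮 := by
      rw [h𝒮, Finset.mem_filter, Finset.mem_powerset]
      refine ⟨Finset.insert_subset ht hCT, ?_⟩
      rw [Finset.card_insert_of_notMem htC]
      push_cast
      nlinarith
    have := hCmax _ hmemS
    rw [Finset.card_insert_of_notMem htC] at this
    omega
  -- double counting
  have hsum : ε * K.card * T.card ≤ ((K.card : ℝ) * (tile C).card) := by
    calc ε * K.card * T.card = ∑ _t ∈ T, ε * K.card := by
          rw [Finset.sum_const, nsmul_eq_mul]; ring
      _ ≤ ∑ t ∈ T, (((K.image (· * t)) ∩ tile C).card : ℝ) :=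
          Finset.sum_le_sum (fun t ht => le_of_lt (key t ht))
      _ = ((∑ t ∈ T, ((K.image (· * t)) ∩ tile C).card : ℕ) : ℝ) := by push_cast; rfl
      _ ≤ ((K.card * (tile C).card : ℕ) : ℝ) := by
          exact_mod_cast sum_inter_le K (tile C) T
      _ = (K.card : ℝ) * (tile C).card := by push_cast; rfl
  have : (K.card : ℝ) * (ε * T.card) ≤ (K.card : ℝ) * (tile C).card := by nlinarith
  exact le_of_mul_le_mul_left this hK0


lemma stages (h : Finset S → ℝ)
    (H1 : ∀ A B : Finset S, h (A ∪ B) ≤ h A + h B)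
    (H2 : ∀ (s : S) (A : Finset S), h (A.image (· * s)) ≤ h A)
    (h0 : h ∅ = 0)
    (ε μ : ℝ) (hε0 : 0 < ε) (hε1 : ε < 1) (hμ : 0 ≤ μ)
    (F : Finset S) (L : List (Finset S)) :
    (∀ K ∈ L, K.Nonempty) →
    (∀ K ∈ L, h K ≤ μ * K.card) →
    (L.Pairwise (fun K K' => ∀ k ∈ K', (((K.image (k * ·)) \ K).card : ℝ)
        ≤ ε^2 * (1 - ε) / (4 * K'.card) * K.card)) →
    (∀ K ∈ L, ∀ k ∈ K, (((F.image (k * ·)) \ F).card : ℝ) ≤ ε^2 / (4 * K.card) * F.card) →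
    ∀ (D : Finset S) (M : ℝ), D ⊆ F → 0 ≤ M →
    (1 - ε) * M ≤ (D.card : ℝ) → h D ≤ μ * M →
    (∀ K ∈ L, ∀ k ∈ K, ((F.filter (fun s => k * s ∈ D ∧ s ∉ D)).card : ℝ)
        ≤ ε^2 * (1 - ε) / (4 * K.card) * M) →
    ∃ (D' : Finset S) (M' : ℝ), D ⊆ D' ∧ D' ⊆ F ∧ 0 ≤ M' ∧
      (1 - ε) * M' ≤ (D'.card : ℝ) ∧ h D' ≤ μ * M' ∧
      (((F \ D').card : ℝ) ≤ ε * F.card ∨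
        (D.card : ℝ) + L.length * (ε^2 / 2) * F.card ≤ (D'.card : ℝ)) := by
  classical
  induction L with
  | nil =>
    intro _ _ _ _ D M hDF hM0 hDM hhD _
    exact ⟨D, M, subset_rfl, hDF, hM0, hDM, hhD, Or.inr (by simp)⟩
  | cons K L ih =>
    intro hL1 hL2 hL3 hL4 D M hDF hM0 hDM hhD hbad
    have hKne : K.Nonempty := hL1 K (List.mem_cons_self)
    have hKcard : (0:ℝ) < K.card := by
      have := Finset.card_pos.2 hKne
      exact_mod_cast this
    have hFcard : (0:ℝ) ≤ F.card := Nat.cast_nonneg _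
    by_cases hsmall : ((F \ D).card : ℝ) ≤ ε * F.card
    · exact ⟨D, M, subset_rfl, hDF, hM0, hDM, hhD, Or.inl hsmall⟩
    push_neg at hsmall
    set F' := F \ D with hF'def
    set T := F'.filter (fun s => ∀ k ∈ K, k * s ∈ F') with hTdef
    have hMF : (1 - ε) * M ≤ (F.card : ℝ) := by
      have := Finset.card_le_card hDF
      have : (D.card : ℝ) ≤ F.card := by exact_mod_cast this
      linarith
    -- badness bound
    have hbadF' : ((F' \ T).card : ℝ) ≤ ε^2 / 2 * F.card := by
      have hsub : F' \ T ⊆ K.biUnion (fun k =>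
          F.filter (fun s => k * s ∉ F) ∪ F.filter (fun s => k * s ∈ D ∧ s ∉ D)) := by
        intro s hs
        rw [Finset.mem_sdiff, hTdef, Finset.mem_filter] at hs
        obtain ⟨hsF', hsbad⟩ := hs
        push_neg at hsbad
        obtain ⟨k, hkK, hks⟩ := hsbad hsF'
        rw [Finset.mem_biUnion]
        refine ⟨k, hkK, ?_⟩
        have hsF : s ∈ F := (Finset.mem_sdiff.1 hsF').1
        have hsD : s ∉ D := (Finset.mem_sdiff.1 hsF').2
        rw [Finset.mem_union, Finset.mem_filter, Finset.mem_filter]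
        rw [hF'def, Finset.mem_sdiff] at hks
        push_neg at hks
        by_cases hkF : k * s ∈ F
        · exact Or.inr ⟨hsF, hks hkF, hsD⟩
        · exact Or.inl ⟨hsF, hkF⟩
      have hcard1 : ((F' \ T).card : ℝ) ≤ ∑ k ∈ K,
          (((F.filter (fun s => k * s ∉ F)).card : ℝ)
            + ((F.filter (fun s => k * s ∈ D ∧ s ∉ D)).card : ℝ)) := by
        calc ((F' \ T).card : ℝ) ≤ ((K.biUnion (fun k =>
            F.filter (fun s => k * s ∉ F) ∪ F.filter (fun s => k * s ∈ D ∧ s ∉ D))).card : ℝ) := by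
              exact_mod_cast Finset.card_le_card hsub
          _ ≤ ((∑ k ∈ K, (F.filter (fun s => k * s ∉ F) ∪
              F.filter (fun s => k * s ∈ D ∧ s ∉ D)).card : ℕ) : ℝ) := by
              exact_mod_cast Finset.card_biUnion_le
          _ ≤ _ := by
              push_cast
              apply Finset.sum_le_sum
              intro k _
              exact_mod_cast Finset.card_union_le _ _
      have hterm : ∀ k ∈ K, ((F.filter (fun s => k * s ∉ F)).card : ℝ)
            + ((F.filter (fun s => k * s ∈ D ∧ s ∉ D)).card : ℝ)
          ≤ ε^2 / (4 * K.card) * F.card + ε^2 * (1 - ε) / (4 * K.card) * M := by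
        intro k hk
        have t1 : ((F.filter (fun s => k * s ∉ F)).card : ℝ)
            ≤ (((F.image (k * ·)) \ F).card : ℝ) := by exact_mod_cast card_bad_le' k F
        have t2 := hL4 K (List.mem_cons_self) k hk
        have t3 := hbad K (List.mem_cons_self) k hk
        linarith
      have hsum2 : ((F' \ T).card : ℝ)
          ≤ K.card * (ε^2 / (4 * K.card) * F.card + ε^2 * (1 - ε) / (4 * K.card) * M) := by
        calc ((F' \ T).card : ℝ) ≤ _ := hcard1
          _ ≤ ∑ _k ∈ K, (ε^2 / (4 * K.card) * F.card + ε^2 * (1 - ε) / (4 * K.card) * M) :=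
              Finset.sum_le_sum hterm
          _ = K.card * (ε^2 / (4 * K.card) * F.card + ε^2 * (1 - ε) / (4 * K.card) * M) := by
              rw [Finset.sum_const, nsmul_eq_mul]
      have e1 : (K.card : ℝ) * (ε^2 / (4 * K.card) * F.card) = ε^2 / 4 * F.card := by
        field_simp
      have e2 : (K.card : ℝ) * (ε^2 * (1 - ε) / (4 * K.card) * M) = ε^2 * ((1-ε) * M) / 4 := by
        field_simp
      have e3 : ε^2 * ((1-ε) * M) / 4 ≤ ε^2 / 4 * F.card := by
        have := mul_le_mul_of_nonneg_left hMF (by positivity : (0:ℝ) ≤ ε^2)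
        linarith
      calc ((F' \ T).card : ℝ) ≤ _ := hsum2
        _ = ε^2 / 4 * F.card + ε^2 * ((1-ε) * M) / 4 := by rw [mul_add, e1, e2]
        _ ≤ ε^2 / 2 * F.card := by linarith
    have hTsub : T ⊆ F' := Finset.filter_subset _ _
    have hTcard : ((F'.card : ℝ) - ε^2/2 * F.card) ≤ (T.card : ℝ) := by
      have h1 : (F' \ T).card = F'.card - T.card := Finset.card_sdiff_of_subset hTsub
      have h2 : T.card ≤ F'.card := Finset.card_le_card hTsub
      have h3 : ((F' \ T).card : ℝ) = (F'.card : ℝ) - T.card := by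
        rw [h1, Nat.cast_sub h2]
      linarith
    obtain ⟨C, hCT, hCmass, hCcover⟩ := cover_step K T hKne ε hε0 hε1
    set E := C.biUnion (fun t => K.image (· * t)) with hEdef
    have hEF' : E ⊆ F' := by
      intro x hx
      rw [hEdef, Finset.mem_biUnion] at hx
      obtain ⟨t, htC, hxt⟩ := hx
      have htT := hCT htC
      rw [hTdef, Finset.mem_filter] at htT
      rcases Finset.mem_image.1 hxt with ⟨k, hkK, rfl⟩
      exact htT.2 k hkK
    have hdisj : Disjoint E D := Finset.disjoint_of_subset_left hEF' Finset.sdiff_disjoint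
    set D2 := D ∪ E with hD2def
    set M2 := M + (C.card : ℝ) * K.card with hM2def
    have hD2F : D2 ⊆ F := Finset.union_subset hDF (hEF'.trans (Finset.sdiff_subset))
    have hD2card : (D2.card : ℝ) = (D.card : ℝ) + E.card := by
      rw [hD2def, Finset.card_union_of_disjoint hdisj.symm]
      push_cast
      ring
    have hM20 : 0 ≤ M2 := by
      have : (0:ℝ) ≤ (C.card : ℝ) * K.card := by positivity
      linarith
    have hs2 : (1 - ε) * M2 ≤ (D2.card : ℝ) := by
      rw [hM2def, hD2card, mul_add]
      have : (E.card : ℝ) ≥ (1 - ε) * ((C.card : ℝ) * K.card) := hCmass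
      linarith
    have hhE : h E ≤ (C.card : ℝ) * (μ * K.card) := by
      calc h E ≤ ∑ c ∈ C, h (K.image (· * c)) := h_biUnion_le h H1 h0 C _
        _ ≤ ∑ c ∈ C, h K := Finset.sum_le_sum (fun c _ => H2 c K)
        _ = (C.card : ℝ) * h K := by rw [Finset.sum_const, nsmul_eq_mul]
        _ ≤ (C.card : ℝ) * (μ * K.card) := by
            apply mul_le_mul_of_nonneg_left (hL2 K (List.mem_cons_self)) (Nat.cast_nonneg _)
    have hhD2 : h D2 ≤ μ * M2 := by
      calc h D2 ≤ h D + h E := H1 D E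
        _ ≤ μ * M + (C.card : ℝ) * (μ * K.card) := by linarith
        _ = μ * M2 := by rw [hM2def]; ring
    -- progress
    have hprog : ε^2/2 * F.card ≤ (E.card : ℝ) := by
      have h1 : ε * T.card ≤ (E.card : ℝ) := hCcover
      have h2 : ε * ((F'.card : ℝ) - ε^2/2 * F.card) ≤ ε * T.card :=
        mul_le_mul_of_nonneg_left hTcard hε0.le
      have h3 : ε * (F.card : ℝ) < F'.card := hsmall
      nlinarith
    -- new bad bounds
    have hbad2 : ∀ K' ∈ L, ∀ k ∈ K', ((F.filter (fun s => k * s ∈ D2 ∧ s ∉ D2)).card : ℝ)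
        ≤ ε^2 * (1 - ε) / (4 * K'.card) * M2 := by
      intro K' hK' k hkK'
      have hsub : F.filter (fun s => k * s ∈ D2 ∧ s ∉ D2) ⊆
          F.filter (fun s => k * s ∈ D ∧ s ∉ D) ∪
          C.biUnion (fun t => F.filter (fun s => k * s ∈ K.image (· * t) ∧ s ∉ K.image (· * t))) := by
        intro s hs
        rw [Finset.mem_filter] at hs
        obtain ⟨hsF, hksD2, hsD2⟩ := hs
        rw [hD2def, Finset.mem_union] at hksD2 hsD2
        push_neg at hsD2
        rw [Finset.mem_union]
        rcases hksD2 with hksD | hksE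
        · exact Or.inl (Finset.mem_filter.2 ⟨hsF, hksD, hsD2.1⟩)
        · right
          rw [hEdef, Finset.mem_biUnion] at hksE
          obtain ⟨t, htC, hkst⟩ := hksE
          rw [Finset.mem_biUnion]
          refine ⟨t, htC, Finset.mem_filter.2 ⟨hsF, hkst, ?_⟩⟩
          intro hst
          exact hsD2.2 (Finset.mem_biUnion.2 ⟨t, htC, hst⟩)
      have hrel : ∀ k' ∈ K', (((K.image (k' * ·)) \ K).card : ℝ)
          ≤ ε^2 * (1 - ε) / (4 * K'.card) * K.card :=
        (List.pairwise_cons.1 hL3).1 K' hK'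
      have hbndK := hrel k hkK'
      have hcard : ((F.filter (fun s => k * s ∈ D2 ∧ s ∉ D2)).card : ℝ)
          ≤ ((F.filter (fun s => k * s ∈ D ∧ s ∉ D)).card : ℝ)
            + (C.card : ℝ) * (ε^2 * (1 - ε) / (4 * K'.card) * K.card) := by
        have c1 : ((F.filter (fun s => k * s ∈ D2 ∧ s ∉ D2)).card : ℝ)
            ≤ ((F.filter (fun s => k * s ∈ D ∧ s ∉ D)).card : ℝ)
              + ∑ t ∈ C, ((F.filter (fun s => k * s ∈ K.image (· * t) ∧ s ∉ K.image (· * t))).card : ℝ) := by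
          calc ((F.filter (fun s => k * s ∈ D2 ∧ s ∉ D2)).card : ℝ)
              ≤ (((F.filter (fun s => k * s ∈ D ∧ s ∉ D) ∪
                C.biUnion (fun t => F.filter (fun s => k * s ∈ K.image (· * t) ∧ s ∉ K.image (· * t)))).card : ℕ) : ℝ) := by
                exact_mod_cast Finset.card_le_card hsub
            _ ≤ _ := by
                push_cast
                have u1 := Finset.card_union_le (F.filter (fun s => k * s ∈ D ∧ s ∉ D))
                  (C.biUnion (fun t => F.filter (fun s => k * s ∈ K.image (· * t) ∧ s ∉ K.image (· * t))))
                have u2 := Finset.card_biUnion_le (s := C)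
                  (t := fun t => F.filter (fun s => k * s ∈ K.image (· * t) ∧ s ∉ K.image (· * t)))
                have : ((C.biUnion (fun t => F.filter (fun s => k * s ∈ K.image (· * t) ∧ s ∉ K.image (· * t)))).card : ℝ)
                    ≤ ∑ t ∈ C, ((F.filter (fun s => k * s ∈ K.image (· * t) ∧ s ∉ K.image (· * t))).card : ℝ) := by
                  exact_mod_cast u2
                have u1' : ((((F.filter (fun s => k * s ∈ D ∧ s ∉ D)) ∪
                    C.biUnion (fun t => F.filter (fun s => k * s ∈ K.image (· * t) ∧ s ∉ K.image (· * t)))).card : ℝ))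
                    ≤ ((F.filter (fun s => k * s ∈ D ∧ s ∉ D)).card : ℝ)
                      + ((C.biUnion (fun t => F.filter (fun s => k * s ∈ K.image (· * t) ∧ s ∉ K.image (· * t)))).card : ℝ) := by
                  exact_mod_cast u1
                linarith
        have c2 : ∀ t ∈ C, ((F.filter (fun s => k * s ∈ K.image (· * t) ∧ s ∉ K.image (· * t))).card : ℝ)
            ≤ ε^2 * (1 - ε) / (4 * K'.card) * K.card := by
          intro t _
          have v1 := card_bad_le k (K.image (· * t)) F
          have v2 := bnd_rimage k t K
          have : ((F.filter (fun s => k * s ∈ K.image (· * t) ∧ s ∉ K.image (· * t))).card : ℕ)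
              ≤ ((K.image (k * ·)) \ K).card := by omega
          calc ((F.filter (fun s => k * s ∈ K.image (· * t) ∧ s ∉ K.image (· * t))).card : ℝ)
              ≤ (((K.image (k * ·)) \ K).card : ℝ) := by exact_mod_cast this
            _ ≤ _ := hbndK
        calc ((F.filter (fun s => k * s ∈ D2 ∧ s ∉ D2)).card : ℝ) ≤ _ := c1
          _ ≤ ((F.filter (fun s => k * s ∈ D ∧ s ∉ D)).card : ℝ)
              + ∑ _t ∈ C, (ε^2 * (1 - ε) / (4 * K'.card) * K.card) := by
              have := Finset.sum_le_sum c2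
              linarith
          _ = _ := by rw [Finset.sum_const, nsmul_eq_mul]
      have hbadD := hbad K' (List.mem_cons_of_mem _ hK') k hkK'
      calc ((F.filter (fun s => k * s ∈ D2 ∧ s ∉ D2)).card : ℝ) ≤ _ := hcard
        _ ≤ ε^2 * (1 - ε) / (4 * K'.card) * M + (C.card : ℝ) * (ε^2 * (1 - ε) / (4 * K'.card) * K.card) := by
            linarith
        _ = ε^2 * (1 - ε) / (4 * K'.card) * M2 := by rw [hM2def]; ring
    -- apply IH
    obtain ⟨D', M', hsub', hD'F, hM'0, hDM', hhD', hor⟩ :=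
      ih (fun K hK => hL1 K (List.mem_cons_of_mem _ hK))
        (fun K hK => hL2 K (List.mem_cons_of_mem _ hK))
        (List.pairwise_cons.1 hL3).2
        (fun K hK => hL4 K (List.mem_cons_of_mem _ hK))
        D2 M2 hD2F hM20 hs2 hhD2 hbad2
    refine ⟨D', M', (Finset.subset_union_left).trans hsub', hD'F, hM'0, hDM', hhD', ?_⟩
    rcases hor with h1 | h2
    · exact Or.inl h1
    · right
      have hD2card' : (D.card : ℝ) + ε^2/2 * F.card ≤ (D2.card : ℝ) := by
        rw [hD2card]; linarith
      have hlen : ((K :: L).length : ℝ) = (L.length : ℝ) + 1 := by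
        simp
      rw [hlen]
      linarith

lemma apply_tiling (h : Finset S → ℝ)
    (H1 : ∀ A B : Finset S, h (A ∪ B) ≤ h A + h B)
    (H2 : ∀ (s : S) (A : Finset S), h (A.image (· * s)) ≤ h A)
    (h0 : h ∅ = 0)
    (ε μ : ℝ) (hε0 : 0 < ε) (hε1 : ε < 1) (hμ : 0 ≤ μ)
    (F : Finset S) (hF : F.Nonempty) (L : List (Finset S))
    (hlen : 1 < (L.length : ℝ) * (ε^2/2))
    (hL1 : ∀ K ∈ L, K.Nonempty)
    (hL2 : ∀ K ∈ L, h K ≤ μ * K.card)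
    (hL3 : L.Pairwise (fun K K' => ∀ k ∈ K', (((K.image (k * ·)) \ K).card : ℝ)
        ≤ ε^2 * (1 - ε) / (4 * K'.card) * K.card))
    (hL4 : ∀ K ∈ L, ∀ k ∈ K, (((F.image (k * ·)) \ F).card : ℝ) ≤ ε^2 / (4 * K.card) * F.card) :
    h F ≤ (μ / (1 - ε) + h {1} * ε) * F.card := by
  classical
  have hFpos : (0:ℝ) < F.card := by exact_mod_cast Finset.card_pos.2 hF
  have hbad0 : ∀ K ∈ L, ∀ k ∈ K, ((F.filter (fun s => k * s ∈ (∅ : Finset S) ∧ s ∉ (∅ : Finset S))).card : ℝ)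
      ≤ ε^2 * (1 - ε) / (4 * K.card) * 0 := by
    intro K _ k _
    simp
  obtain ⟨D', M', _, hD'F, hM'0, hDM', hhD', hor⟩ :=
    stages h H1 H2 h0 ε μ hε0 hε1 hμ F L hL1 hL2 hL3 hL4 ∅ 0
      (Finset.empty_subset F) le_rfl (by simp) (by simp [h0]) hbad0
  have hD'card : (D'.card : ℝ) ≤ F.card := by
    exact_mod_cast Finset.card_le_card hD'F
  rcases hor with hsm | hbig
  · -- main case
    have hM'F : M' ≤ (F.card : ℝ) / (1 - ε) := by
      rw [le_div_iff₀ (by linarith : (0:ℝ) < 1 - ε)]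
      calc M' * (1 - ε) = (1 - ε) * M' := by ring
        _ ≤ (D'.card : ℝ) := hDM'
        _ ≤ _ := hD'card
    have hsplit : F = D' ∪ (F \ D') := by
      rw [Finset.union_sdiff_of_subset hD'F]
    have hrest : h (F \ D') ≤ h {1} * ((F \ D').card : ℝ) := h_le_card h H1 H2 h0 _
    have hone : 0 ≤ h {1} := h_nonneg h H1 _
    calc h F = h (D' ∪ (F \ D')) := by rw [← hsplit]
      _ ≤ h D' + h (F \ D') := H1 _ _
      _ ≤ μ * M' + h {1} * ((F \ D').card : ℝ) := by linarith
      _ ≤ μ * ((F.card : ℝ) / (1 - ε)) + h {1} * (ε * F.card) := by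
          have := mul_le_mul_of_nonneg_left hM'F hμ
          have := mul_le_mul_of_nonneg_left hsm hone
          linarith
      _ = (μ / (1 - ε) + h {1} * ε) * F.card := by ring
  · exfalso
    have : (L.length : ℝ) * (ε^2/2) * F.card ≤ F.card := by
      calc (L.length : ℝ) * (ε^2/2) * F.card = 0 + (L.length : ℝ) * (ε^2/2) * F.card := by ring
        _ ≤ (D'.card : ℝ) := by simpa using hbig
        _ ≤ F.card := hD'card
    nlinarith

/-- finite conjunction of eventual statements over a list -/
lemma eventually_list {α β : Type*} (l : Filter α) (L : List β) (p : β → α → Prop)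
    (hp : ∀ b ∈ L, ∀ᶠ x in l, p b x) : ∀ᶠ x in l, ∀ b ∈ L, p b x := by
  induction L with
  | nil => simp
  | cons b L ih =>
    have h1 := hp b (List.mem_cons_self)
    have h2 := ih (fun b hb => hp b (List.mem_cons_of_mem _ hb))
    filter_upwards [h1, h2] with x hx1 hx2
    intro b' hb'
    rcases List.mem_cons.1 hb' with rfl | hb'
    · exact hx1
    · exact hx2 b' hb'

lemma folner_ev (N : LeftFolnerNet.{u, v} S) (s : S) (δ : ℝ) (hδ : 0 < δ) :
    ∀ᶠ i in Filter.atTop, ((((N.F i).image (s * ·)) \ N.F i).card : ℝ) ≤ δ * (N.F i).card := by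
  have h1 : ∀ᶠ i in Filter.atTop,
      ((((N.F i).image (s * ·)) \ N.F i).card : ℝ) / ((N.F i).card : ℝ) < δ :=
    (N.folner s).eventually_lt_const hδ
  filter_upwards [h1] with i hi
  have hc : (0:ℝ) < (N.F i).card := by exact_mod_cast Finset.card_pos.2 (N.nonempty i)
  rw [div_lt_iff₀ hc] at hi
  linarith


lemma net_neBot (N : LeftFolnerNet.{u, v} S) : (Filter.atTop : Filter N.I).NeBot :=
  Filter.atTop_neBot_iff.2 ⟨N.ne, N.dir⟩

lemma rat_bounds (h : Finset S → ℝ) (H1 : ∀ A B : Finset S, h (A ∪ B) ≤ h A + h B)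
    (H2 : ∀ (s : S) (A : Finset S), h (A.image (· * s)) ≤ h A) (h0 : h ∅ = 0)
    (N : LeftFolnerNet.{u, v} S) (i : N.I) :
    0 ≤ h (N.F i) / ((N.F i).card : ℝ) ∧ h (N.F i) / ((N.F i).card : ℝ) ≤ h {1} := by
  have hc : (0:ℝ) < (N.F i).card := by exact_mod_cast Finset.card_pos.2 (N.nonempty i)
  constructor
  · exact div_nonneg (h_nonneg h H1 _) hc.le
  · rw [div_le_iff₀ hc]
    exact h_le_card h H1 H2 h0 _

/-- The key comparison: limsup along any net is at most liminf along any other net. -/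
lemma key (h : Finset S → ℝ)
    (H1 : ∀ A B : Finset S, h (A ∪ B) ≤ h A + h B)
    (H2 : ∀ (s : S) (A : Finset S), h (A.image (· * s)) ≤ h A)
    (h0 : h ∅ = 0)
    (M : LeftFolnerNet.{u, v} S) (N : LeftFolnerNet.{u, w} S) :
    Filter.limsup (fun i => h (N.F i) / ((N.F i).card : ℝ)) Filter.atTop
      ≤ Filter.liminf (fun i => h (M.F i) / ((M.F i).card : ℝ)) Filter.atTop := by
  haveI := net_neBot M
  haveI := net_neBot N
  set ratM := fun i => h (M.F i) / ((M.F i).card : ℝ) with hratM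
  set ratN := fun i => h (N.F i) / ((N.F i).card : ℝ) with hratN
  have hbddM_above : Filter.IsBoundedUnder (· ≤ ·) (Filter.atTop : Filter M.I) ratM :=
    Filter.isBoundedUnder_of ⟨h {1}, fun i => (rat_bounds h H1 H2 h0 M i).2⟩
  have hbddM_below : Filter.IsBoundedUnder (· ≥ ·) (Filter.atTop : Filter M.I) ratM :=
    Filter.isBoundedUnder_of ⟨0, fun i => (rat_bounds h H1 H2 h0 M i).1⟩
  have hbddN_above : Filter.IsBoundedUnder (· ≤ ·) (Filter.atTop : Filter N.I) ratN :=
    Filter.isBoundedUnder_of ⟨h {1}, fun i => (rat_bounds h H1 H2 h0 N i).2⟩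
  have hbddN_below : Filter.IsBoundedUnder (· ≥ ·) (Filter.atTop : Filter N.I) ratN :=
    Filter.isBoundedUnder_of ⟨0, fun i => (rat_bounds h H1 H2 h0 N i).1⟩
  set A := Filter.liminf ratM Filter.atTop with hA
  have hA0 : 0 ≤ A :=
    Filter.le_liminf_of_le (hbddM_above.isCoboundedUnder_ge)
      (Filter.Eventually.of_forall (fun i => (rat_bounds h H1 H2 h0 M i).1))
  have hone : 0 ≤ h {1} := h_nonneg h H1 _
  -- for each ε ∈ (0,1), the bound
  have main : ∀ ε : ℝ, 0 < ε → ε < 1 →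
      Filter.limsup ratN Filter.atTop ≤ (A + ε) / (1 - ε) + h {1} * ε := by
    intro ε hε0 hε1
    set μ := A + ε with hμdef
    have hμ : 0 ≤ μ := by linarith
    have hfreq : ∃ᶠ i in Filter.atTop, ratM i < μ :=
      Filter.frequently_lt_of_liminf_lt (hbddM_above.isCoboundedUnder_ge) (by
        rw [← hA]; linarith)
    -- tower construction
    have tower : ∀ n : ℕ, ∃ L : List (Finset S), L.length = n ∧
        (∀ K ∈ L, K.Nonempty) ∧ (∀ K ∈ L, h K ≤ μ * K.card) ∧
        L.Pairwise (fun K K' => ∀ k ∈ K', (((K.image (k * ·)) \ K).card : ℝ)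
          ≤ ε^2 * (1 - ε) / (4 * K'.card) * K.card) := by
      intro n
      induction n with
      | zero => exact ⟨[], rfl, by simp, by simp, List.Pairwise.nil⟩
      | succ n ihn =>
        obtain ⟨L, hlen, h1, h2, h3⟩ := ihn
        have hev : ∀ᶠ i in Filter.atTop, ∀ K' ∈ L, ∀ k ∈ K',
            ((((M.F i).image (k * ·)) \ M.F i).card : ℝ)
              ≤ ε^2 * (1 - ε) / (4 * K'.card) * (M.F i).card := by
          apply eventually_list
          intro K' hK'
          rw [Filter.eventually_all_finset]
          intro k _
          apply folner_ev
          have hc : (0:ℝ) < K'.card := by exact_mod_cast Finset.card_pos.2 (h1 K' hK')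
          apply div_pos (mul_pos (by positivity) (by linarith)) (by positivity)
        obtain ⟨i, hi1, hi2⟩ := (hfreq.and_eventually hev).exists
        refine ⟨M.F i :: L, by simp [hlen], ?_, ?_, ?_⟩
        · intro K hK
          rcases List.mem_cons.1 hK with rfl | hK
          · exact M.nonempty i
          · exact h1 K hK
        · intro K hK
          rcases List.mem_cons.1 hK with rfl | hK
          · have hc : (0:ℝ) < (M.F i).card := by
              exact_mod_cast Finset.card_pos.2 (M.nonempty i)
            rw [hratM] at hi1
            rw [div_lt_iff₀ hc] at hi1
            exact le_of_lt (by linarith [hi1])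
          · exact h2 K hK
        · exact List.pairwise_cons.2 ⟨hi2, h3⟩
    -- choose n large
    set n := Nat.ceil (2 / ε^2) + 1 with hn
    have hnlen : 1 < (n : ℝ) * (ε^2/2) := by
      have h1 : (2 / ε^2 : ℝ) ≤ Nat.ceil (2 / ε^2 : ℝ) := Nat.le_ceil _
      have h2 : ((Nat.ceil (2 / ε^2 : ℝ) : ℝ)) < n := by
        rw [hn]; push_cast; linarith
      have hε2 : (0:ℝ) < ε^2 := by positivity
      have : (2 / ε^2 : ℝ) < n := lt_of_le_of_lt h1 h2
      rw [div_lt_iff₀ hε2] at this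
      nlinarith
    obtain ⟨L, hlen, hL1, hL2, hL3⟩ := tower n
    -- eventually along N, invariance
    have hev4 : ∀ᶠ i in Filter.atTop, ∀ K ∈ L, ∀ k ∈ K,
        ((((N.F i).image (k * ·)) \ N.F i).card : ℝ) ≤ ε^2 / (4 * K.card) * (N.F i).card := by
      apply eventually_list
      intro K hK
      rw [Filter.eventually_all_finset]
      intro k _
      apply folner_ev
      have hc : (0:ℝ) < K.card := by exact_mod_cast Finset.card_pos.2 (hL1 K hK)
      positivity
    have hevbound : ∀ᶠ i in Filter.atTop, ratN i ≤ μ / (1 - ε) + h {1} * ε := by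
      filter_upwards [hev4] with i hi
      have happ := apply_tiling h H1 H2 h0 ε μ hε0 hε1 hμ (N.F i) (N.nonempty i) L
        (by rw [hlen]; exact hnlen) hL1 hL2 hL3 hi
      have hc : (0:ℝ) < (N.F i).card := by exact_mod_cast Finset.card_pos.2 (N.nonempty i)
      rw [hratN]
      rw [div_le_iff₀ hc]
      exact happ
    exact Filter.limsup_le_of_le (hbddN_below.isCoboundedUnder_le) hevbound
  -- let ε → 0
  have hcont : Filter.Tendsto (fun ε : ℝ => (A + ε) / (1 - ε) + h {1} * ε)
      (nhdsWithin 0 (Set.Ioi 0)) (nhds A) := by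
    have h1 : Filter.Tendsto (fun ε : ℝ => (A + ε) / (1 - ε) + h {1} * ε) (nhds 0)
        (nhds ((A + 0) / (1 - 0) + h {1} * 0)) := by
      apply Filter.Tendsto.add
      · exact Filter.Tendsto.div (tendsto_const_nhds.add tendsto_id)
          (tendsto_const_nhds.sub tendsto_id) (by norm_num)
      · exact tendsto_const_nhds.mul tendsto_id
    have h2 : (A + 0) / (1 - 0) + h {1} * 0 = A := by norm_num
    rw [h2] at h1
    exact h1.mono_left nhdsWithin_le_nhds
  have hev : ∀ᶠ ε in nhdsWithin (0:ℝ) (Set.Ioi 0),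
      Filter.limsup ratN Filter.atTop ≤ (A + ε) / (1 - ε) + h {1} * ε := by
    filter_upwards [Ioo_mem_nhdsGT_of_mem (Set.left_mem_Ico.2 one_pos)] with ε hε
    exact main ε hε.1 hε.2
  exact ge_of_tendsto hcont hev


end OWProof

/-- Corollary 1.2: if `S` is a cancellative monoid admitting a left-Følner net, and
`h` is a subadditive and right-subinvariant real-valued function on finite subsets of `S`,
then there is `λ ≥ 0`, depending only on `h`, such that `h(F_i)/|F_i| → λ` for every
left-Følner net `(F_i)` of `S`. -/
theorem ornstein_weiss_lemma_monoid.{u, v, w} {S : Type u} [CancelMonoid S]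
    [DecidableEq S]
    (hamen : Nonempty (LeftFolnerNet.{u, v} S))
    (h : Finset S → ℝ)
    (H1 : ∀ A B : Finset S, h (A ∪ B) ≤ h A + h B)
    (H2 : ∀ (s : S) (A : Finset S), h (A.image (· * s)) ≤ h A) :
    ∃ lam : ℝ, 0 ≤ lam ∧
      ∀ N : LeftFolnerNet.{u, w} S,
        Filter.Tendsto (fun i => h (N.F i) / ((N.F i).card : ℝ))
          Filter.atTop (nhds lam) := by
  classical
  obtain ⟨M0⟩ := hamen
  -- normalize h so that h ∅ = 0
  set h' : Finset S → ℝ := fun A => if A = ∅ then 0 else h A with hh'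
  have h0' : h' ∅ = 0 := by simp [hh']
  have hagree : ∀ A : Finset S, A.Nonempty → h' A = h A := by
    intro A hA
    simp [hh', Finset.nonempty_iff_ne_empty.1 hA]
  have H1' : ∀ A B : Finset S, h' (A ∪ B) ≤ h' A + h' B := by
    intro A B
    have hnn : ∀ C : Finset S, 0 ≤ h' C := by
      intro C
      by_cases hC : C = ∅
      · simp [hh', hC]
      · have := OWProof.h_nonneg h H1 C
        simp [hh', hC]
        exact this
    by_cases hA : A = ∅
    · simp only [hA, Finset.empty_union, h0']
      linarith [hnn B]
    by_cases hB : B = ∅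
    · simp only [hB, Finset.union_empty, h0']
      linarith [hnn A]
    have hAB : A ∪ B ≠ ∅ := by
      intro hc
      exact hA (Finset.union_eq_empty.1 hc).1
    rw [hagree _ (Finset.nonempty_iff_ne_empty.2 hAB),
      hagree _ (Finset.nonempty_iff_ne_empty.2 hA),
      hagree _ (Finset.nonempty_iff_ne_empty.2 hB)]
    exact H1 A B
  have H2' : ∀ (s : S) (A : Finset S), h' (A.image (· * s)) ≤ h' A := by
    intro s A
    by_cases hA : A = ∅
    · simp [hA, h0']
    · have hAne : A.Nonempty := Finset.nonempty_iff_ne_empty.2 hA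
      rw [hagree _ hAne, hagree _ (hAne.image _)]
      exact H2 s A
  -- the limit value
  haveI := OWProof.net_neBot M0
  set lam := Filter.liminf (fun i => h' (M0.F i) / ((M0.F i).card : ℝ)) Filter.atTop with hlam
  have hbddM0_above : Filter.IsBoundedUnder (· ≤ ·) (Filter.atTop : Filter M0.I)
      (fun i => h' (M0.F i) / ((M0.F i).card : ℝ)) :=
    Filter.isBoundedUnder_of ⟨h' {1}, fun i => (OWProof.rat_bounds h' H1' H2' h0' M0 i).2⟩
  have hbddM0_below : Filter.IsBoundedUnder (· ≥ ·) (Filter.atTop : Filter M0.I)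
      (fun i => h' (M0.F i) / ((M0.F i).card : ℝ)) :=
    Filter.isBoundedUnder_of ⟨0, fun i => (OWProof.rat_bounds h' H1' H2' h0' M0 i).1⟩
  have hlam0 : 0 ≤ lam := by
    rw [hlam]
    exact Filter.le_liminf_of_le (hbddM0_above.isCoboundedUnder_ge)
      (Filter.Eventually.of_forall (fun i => (OWProof.rat_bounds h' H1' H2' h0' M0 i).1))
  refine ⟨lam, hlam0, ?_⟩
  intro N
  haveI := OWProof.net_neBot N
  have hbddN_above : Filter.IsBoundedUnder (· ≤ ·) (Filter.atTop : Filter N.I)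
      (fun i => h' (N.F i) / ((N.F i).card : ℝ)) :=
    Filter.isBoundedUnder_of ⟨h' {1}, fun i => (OWProof.rat_bounds h' H1' H2' h0' N i).2⟩
  have hbddN_below : Filter.IsBoundedUnder (· ≥ ·) (Filter.atTop : Filter N.I)
      (fun i => h' (N.F i) / ((N.F i).card : ℝ)) :=
    Filter.isBoundedUnder_of ⟨0, fun i => (OWProof.rat_bounds h' H1' H2' h0' N i).1⟩
  have k1 := OWProof.key h' H1' H2' h0' M0 N
  have k2 := OWProof.key h' H1' H2' h0' N M0
  have k3 : lam ≤ Filter.liminf (fun i => h' (N.F i) / ((N.F i).card : ℝ)) Filter.atTop := by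
    calc lam ≤ Filter.limsup (fun i => h' (M0.F i) / ((M0.F i).card : ℝ)) Filter.atTop := by
          rw [hlam]
          exact Filter.liminf_le_limsup hbddM0_above hbddM0_below
      _ ≤ _ := k2
  have k4 : Filter.limsup (fun i => h' (N.F i) / ((N.F i).card : ℝ)) Filter.atTop ≤ lam := by
    rw [hlam]; exact k1
  have htend : Filter.Tendsto (fun i => h' (N.F i) / ((N.F i).card : ℝ))
      Filter.atTop (nhds lam) :=
    tendsto_of_le_liminf_of_limsup_le k3 k4 hbddN_above hbddN_below
  have heq : (fun i => h (N.F i) / ((N.F i).card : ℝ))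
      = (fun i => h' (N.F i) / ((N.F i).card : ℝ)) := by
    funext i
    rw [hagree _ (N.nonempty i)]
  rw [heq]
  exact htend
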